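/- arXiv:2001.05530 — 4 statements merged into one kernel-verified Lean document; each statement's English description precedes it below -/
import Mathlib

section
/- Let X be a real Banach space, D a symmetric dictionary, and E : X → ℝ a uniformly smooth convex Fréchet-differentiable function on a bounded set D_E = {x : E(x) ≤ E(0)} with modulus of smoothness ρ(u) = ρ(E,D_E,u). Let ε ≥ 0 and f^ε ∈ D_E with E(f^ε) ≤ inf_x E(x) + ε and f^ε/A ∈ A₁(D) for some A ≥ 1. Suppose G_{m-1}, G_m ∈ D_E and φ_m ∈ D satisfy the Weak Biorthogonal Greedy Algorithm conditions: ⟨−E'(G_{m-1}), φ_m⟩ ≥ t_m sup_{φ∈D}⟨−E'(G_{m-1}), φ⟩, E(G_m) ≤ inf_{λ≥0} E(G_{m-1}+λφ_m), and ⟨E'(G_{m-1}), G_{m-1}⟩ = 0. Then E(G_m) − E(f^ε) ≤ E(G_{m-1}) − E(f^ε) + inf_{λ≥0} ( −λ t_m A^{-1}(E(G_{m-1}) − E(f^ε)) + 2ρ(λ) ). -/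
open Set

/-- The modulus of smoothness of a function `E` on a set `S`. -/
noncomputable def modS {X : Type*} [NormedAddCommGroup X] [NormedSpace ℝ X]
    (E : X → ℝ) (S : Set X) (u : ℝ) : ℝ :=
  (1 / 2) * sSup ((fun p : X × X => |E (p.1 + u • p.2) + E (p.1 - u • p.2) - 2 * E p.1|)
    '' {p : X × X | p.1 ∈ S ∧ ‖p.2‖ = 1})

/-- Gradient inequality for a differentiable convex function. -/
lemma aux_grad_ineq {X : Type*} [NormedAddCommGroup X] [NormedSpace ℝ X]
    (E : X → ℝ) (hE : ConvexOn ℝ Set.univ E)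
    (E' : X → (X →L[ℝ] ℝ)) (hdiff : ∀ x, HasFDerivAt E (E' x) x)
    (x y : X) : E x + E' x (y - x) ≤ E y := by
  set g : ℝ → ℝ := fun s => E (x + s • (y - x)) with hgdef
  have hg : HasDerivAt g (E' x (y - x)) 0 := by
    have h1 : HasDerivAt (fun s : ℝ => x + s • (y - x)) (y - x) 0 := by
      simpa using ((hasDerivAt_id (0 : ℝ)).smul_const (y - x)).const_add x
    have h2 := (hdiff x).comp_hasDerivAt_of_eq 0 h1 (by simp)
    exact h2
  have hgc : ConvexOn ℝ (univ : Set ℝ) g := by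
    have h3 := hE.comp_affineMap (AffineMap.lineMap x y)
    have heq : (E ∘ (AffineMap.lineMap x y : ℝ →ᵃ[ℝ] X)) = g := by
      funext s
      simp [hgdef, AffineMap.lineMap_apply, add_comm]
    rw [heq] at h3
    simpa using h3
  have hslope := hgc.le_slope_of_hasDerivAt (mem_univ 0) (mem_univ 1) one_pos hg
  rw [slope_def_field] at hslope
  simp only [hgdef] at hslope
  norm_num at hslope
  have hms : E' x (y - x) = E' x y - E' x x := map_sub _ _ _
  linarith

set_option maxHeartbeats 1000000 in
/-- Error Reduction Lemma for the WBGA(co): one-step improvement for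
an iteration of a Weak Biorthogonal Greedy Algorithm. -/
theorem stmt_8 {X : Type*} [NormedAddCommGroup X] [NormedSpace ℝ X] [CompleteSpace X]
    (E : X → ℝ) (hE : ConvexOn ℝ Set.univ E)
    (E' : X → (X →L[ℝ] ℝ)) (hdiff : ∀ x, HasFDerivAt E (E' x) x)
    (Dic : Set X) (hDnorm : ∀ g ∈ Dic, ‖g‖ ≤ 1)
    (hDdense : Dense (Submodule.span ℝ Dic : Set X))
    (hDsymm : ∀ g ∈ Dic, -g ∈ Dic)
    (DE : Set X) (hDE : DE = {x : X | E x ≤ E 0}) (hbdd : Bornology.IsBounded DE)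
    -- uniform smoothness of E on DE
    (husmooth : Filter.Tendsto (fun u => modS E DE u / u)
      (nhdsWithin 0 (Set.Ioi 0)) (nhds 0))
    (ε : ℝ) (hε : 0 ≤ ε) (fε : X) (hfεDE : fε ∈ DE)
    (hfε_min : E fε ≤ sInf (Set.range E) + ε)
    (A : ℝ) (hA : 1 ≤ A) (hfεA : A⁻¹ • fε ∈ closure (convexHull ℝ Dic))
    (t : ℝ) (ht : t ∈ Set.Icc (0 : ℝ) 1)
    (Gprev Gm : X) (hGprev : Gprev ∈ DE) (hGm : Gm ∈ DE) (φm : X) (hφm : φm ∈ Dic)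
    (hgreedy : (-(E' Gprev)) φm ≥ t * sSup ((fun g => (-(E' Gprev)) g) '' Dic))
    (hreduction : E Gm ≤ sInf ((fun lam => E (Gprev + lam • φm)) '' Set.Ici (0 : ℝ)))
    (hbio : E' Gprev Gprev = 0) :
    E Gm - E fε ≤ E Gprev - E fε +
      sInf ((fun lam => -lam * t * A⁻¹ * (E Gprev - E fε) + 2 * modS E DE lam)
        '' Set.Ici (0 : ℝ)) := by
  obtain ⟨ht0, _ht1⟩ := ht
  have hA0 : (0:ℝ) < A := lt_of_lt_of_le one_pos hA
  have hAinv : (0:ℝ) ≤ A⁻¹ := inv_nonneg.2 hA0.le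
  have hEcont : Continuous E := continuous_iff_continuousAt.2 fun x => (hdiff x).continuousAt
  have grad : ∀ x y : X, E x + E' x (y - x) ≤ E y := aux_grad_ineq E hE E' hdiff
  -- modS is nonnegative
  have hmod0 : ∀ u : ℝ, 0 ≤ modS E DE u := by
    intro u
    apply mul_nonneg (by norm_num)
    apply Real.sSup_nonneg
    rintro v ⟨p, -, rfl⟩
    exact abs_nonneg _
  -- boundedness below of the set of values along the ray
  obtain ⟨R0, hR0⟩ : ∃ C, ∀ x ∈ DE, ‖x‖ ≤ C := hbdd.exists_norm_le
  have hSbddPair : BddBelow ((fun lam => E (Gprev + lam • φm)) '' Set.Ici (0:ℝ)) := by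
    by_cases hφ0 : φm = 0
    · refine ⟨E Gprev, ?_⟩
      rintro v ⟨lam, -, rfl⟩
      simp [hφ0]
    · have hν : 0 < ‖φm‖ := norm_pos_iff.2 hφ0
      set L : ℝ := (R0 + ‖Gprev‖) / ‖φm‖ with hLdef
      have hcont : Continuous fun lam : ℝ => E (Gprev + lam • φm) :=
        hEcont.comp (continuous_const.add (continuous_id.smul continuous_const))
      obtain ⟨m0, hm0⟩ := ((isCompact_Icc (a := (0:ℝ)) (b := L)).image hcont).bddBelow
      refine ⟨min m0 (E 0), ?_⟩
      rintro v ⟨lam, hlam, rfl⟩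
      rcases le_or_gt lam L with hcase | hcase
      · exact le_trans (min_le_left _ _) (hm0 (mem_image_of_mem _ ⟨hlam, hcase⟩))
      · refine le_trans (min_le_right _ _) ?_
        by_contra hcon
        push_neg at hcon
        have hmem : Gprev + lam • φm ∈ DE := by
          rw [hDE]; exact hcon.le
        have h1 : ‖Gprev + lam • φm‖ ≤ R0 := hR0 _ hmem
        have hlam' : (0:ℝ) ≤ lam := hlam
        have h3 : ‖lam • φm‖ ≤ ‖Gprev + lam • φm‖ + ‖Gprev‖ := by
          simpa using norm_sub_le (Gprev + lam • φm) Gprev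
        have h4 : ‖lam • φm‖ = lam * ‖φm‖ := by
          rw [norm_smul lam φm, Real.norm_of_nonneg hlam']
        have h5 : lam ≤ L := by
          rw [hLdef, le_div_iff₀ hν]; linarith
        linarith
  have hGmle : E Gm ≤ E Gprev := by
    refine hreduction.trans (csInf_le hSbddPair ?_)
    exact ⟨0, self_mem_Ici, by simp⟩
  set a : ℝ := E Gprev - E fε with hadef
  -- the key greedy estimate
  have hkey : t * (A⁻¹ * a) ≤ -(E' Gprev φm) := by
    have hB1 : a ≤ -(E' Gprev fε) := by
      have hgr := grad Gprev fε
      have hms : E' Gprev (fε - Gprev) = E' Gprev fε - E' Gprev Gprev := map_sub _ _ _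
      rw [hbio, sub_zero] at hms
      rw [hms] at hgr
      rw [hadef]; linarith
    set F : X →L[ℝ] ℝ := -(E' Gprev) with hFdef
    have hbddA : BddAbove ((fun g => F g) '' Dic) := by
      refine ⟨‖E' Gprev‖, ?_⟩
      rintro v ⟨g, hg, rfl⟩
      calc F g ≤ ‖F g‖ := by rw [Real.norm_eq_abs]; exact le_abs_self _
        _ ≤ ‖F‖ * ‖g‖ := F.le_opNorm g
        _ ≤ ‖F‖ * 1 := mul_le_mul_of_nonneg_left (hDnorm g hg) (norm_nonneg F)
        _ = ‖E' Gprev‖ := by rw [mul_one, hFdef, norm_neg]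
    have hs : F (A⁻¹ • fε) ≤ sSup ((fun g => F g) '' Dic) := by
      have hDsub : Dic ⊆ {x | F x ≤ sSup ((fun g => F g) '' Dic)} :=
        fun g hg => le_csSup hbddA (mem_image_of_mem _ hg)
      have hlin : IsLinearMap ℝ fun x => F x := ⟨fun u v => map_add F u v, fun c u => map_smul F c u⟩
      have hconv : Convex ℝ {x | F x ≤ sSup ((fun g => F g) '' Dic)} :=
        convex_halfSpace_le hlin _
      have hclosed : IsClosed {x | F x ≤ sSup ((fun g => F g) '' Dic)} :=
        isClosed_le F.continuous continuous_const
      exact closure_minimal (convexHull_min hDsub hconv) hclosed hfεA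
    have hsmul : F (A⁻¹ • fε) = A⁻¹ * F fε := by
      rw [map_smul, smul_eq_mul]
    have hFfε : a ≤ F fε := by
      rw [hFdef]; simpa using hB1
    have h6 : A⁻¹ * a ≤ sSup ((fun g => F g) '' Dic) := by
      calc A⁻¹ * a ≤ A⁻¹ * F fε := mul_le_mul_of_nonneg_left hFfε hAinv
        _ = F (A⁻¹ • fε) := hsmul.symm
        _ ≤ _ := hs
    have h7 : t * (A⁻¹ * a) ≤ t * sSup ((fun g => F g) '' Dic) :=
      mul_le_mul_of_nonneg_left h6 ht0
    have h8 := h7.trans hgreedy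
    rw [hFdef] at h8
    simpa using h8
  -- main case analysis
  rcases le_or_gt (t * (A⁻¹ * a)) 0 with hc | hc
  · -- the factor is nonpositive hence every element of the infimum set is nonnegative
    have hle : E Gm - E Gprev ≤
        sInf ((fun lam => -lam * t * A⁻¹ * a + 2 * modS E DE lam) '' Set.Ici (0:ℝ)) := by
      refine le_csInf ⟨_, mem_image_of_mem _ (self_mem_Ici : (0:ℝ) ∈ Ici 0)⟩ ?_
      rintro b ⟨lam, hlam, rfl⟩
      have hlam' : (0:ℝ) ≤ lam := hlam
      have h1 : lam * (t * (A⁻¹ * a)) ≤ 0 := mul_nonpos_of_nonneg_of_nonpos hlam' hc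
      have h2 : -lam * t * A⁻¹ * a = -(lam * (t * (A⁻¹ * a))) := by ring
      have := hmod0 lam
      linarith
    linarith
  · -- the factor is positive
    have hφ0 : φm ≠ 0 := by
      intro h
      rw [h] at hkey
      simp at hkey
      linarith
    have hν : 0 < ‖φm‖ := norm_pos_iff.2 hφ0
    have hν1 : ‖φm‖ ≤ 1 := hDnorm φm hφm
    by_cases hdeg : ∀ lam : ℝ, 0 < lam →
        BddAbove ((fun p : X × X => |E (p.1 + lam • p.2) + E (p.1 - lam • p.2) - 2 * E p.1|)
          '' {p : X × X | p.1 ∈ DE ∧ ‖p.2‖ = 1})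
    · -- all the relevant suprema are honest: the standard argument
      have hle : E Gm - E Gprev ≤
          sInf ((fun lam => -lam * t * A⁻¹ * a + 2 * modS E DE lam) '' Set.Ici (0:ℝ)) := by
        refine le_csInf ⟨_, mem_image_of_mem _ (self_mem_Ici : (0:ℝ) ∈ Ici 0)⟩ ?_
        rintro b ⟨lam, hlam, rfl⟩
        have hlam' : (0:ℝ) ≤ lam := hlam
        rcases hlam'.eq_or_lt with hlam0 | hlam0
        · have h0 : -lam * t * A⁻¹ * a = 0 := by rw [← hlam0]; ring
          have := hmod0 lam
          linarith
        · set y : X := ‖φm‖⁻¹ • φm with hydef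
          have hy1 : ‖y‖ = 1 := by
            rw [hydef, norm_smul, norm_inv, norm_norm, inv_mul_cancel₀ hν.ne']
          have hyφ : ‖φm‖ • y = φm := by
            rw [hydef, smul_smul, mul_inv_cancel₀ hν.ne', one_smul]
          have hsm : E (Gprev + lam • y) + E (Gprev - lam • y) - 2 * E Gprev
              ≤ 2 * modS E DE lam := by
            have h1 : |E (Gprev + lam • y) + E (Gprev - lam • y) - 2 * E Gprev| ≤
                sSup ((fun p : X × X => |E (p.1 + lam • p.2) + E (p.1 - lam • p.2) - 2 * E p.1|)
                  '' {p : X × X | p.1 ∈ DE ∧ ‖p.2‖ = 1}) :=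
              le_csSup (hdeg lam hlam0) ⟨(Gprev, y), ⟨hGprev, hy1⟩, rfl⟩
            have h2 : 2 * modS E DE lam =
                sSup ((fun p : X × X => |E (p.1 + lam • p.2) + E (p.1 - lam • p.2) - 2 * E p.1|)
                  '' {p : X × X | p.1 ∈ DE ∧ ‖p.2‖ = 1}) := by
              rw [modS]; ring
            rw [h2]
            exact (le_abs_self _).trans h1
          have hconv1 : E Gprev - lam * E' Gprev y ≤ E (Gprev - lam • y) := by
            have h3 := grad Gprev (Gprev - lam • y)
            have h4 : E' Gprev ((Gprev - lam • y) - Gprev) = -(lam * E' Gprev y) := by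
              rw [show (Gprev - lam • y) - Gprev = -(lam • y) by abel, map_neg, map_smul,
                smul_eq_mul]
            rw [h4] at h3
            linarith
          have h5 : E (Gprev + lam • y) ≤ E Gprev + lam * E' Gprev y + 2 * modS E DE lam := by
            linarith
          have hcomb : E (Gprev + lam • φm) ≤
              (1 - ‖φm‖) * E Gprev + ‖φm‖ * E (Gprev + lam • y) := by
            have h6 := hE.2 (mem_univ Gprev) (mem_univ (Gprev + lam • y))
              (by linarith : (0:ℝ) ≤ 1 - ‖φm‖) hν.le (by ring)
            have h7 : (1 - ‖φm‖) • Gprev + ‖φm‖ • (Gprev + lam • y) = Gprev + lam • φm := by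
              have hsc : ‖φm‖ • (lam • y) = lam • φm := by rw [smul_comm, hyφ]
              rw [smul_add, hsc, ← add_assoc, ← add_smul, sub_add_cancel, one_smul]
            rw [h7] at h6
            simpa [smul_eq_mul] using h6
          have hEy : ‖φm‖ * E' Gprev y = E' Gprev φm := by
            rw [← smul_eq_mul, ← map_smul, hyφ]
          have h8 : E Gm ≤ E (Gprev + lam • φm) :=
            hreduction.trans (csInf_le hSbddPair ⟨lam, hlam, rfl⟩)
          have h9 : ‖φm‖ * E (Gprev + lam • y) ≤
              ‖φm‖ * (E Gprev + lam * E' Gprev y + 2 * modS E DE lam) :=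
            mul_le_mul_of_nonneg_left h5 hν.le
          have h10 : lam * E' Gprev φm ≤ lam * (-(t * (A⁻¹ * a))) :=
            mul_le_mul_of_nonneg_left (by linarith) hlam'
          have h11 : ‖φm‖ * (2 * modS E DE lam) ≤ 2 * modS E DE lam := by
            nlinarith [hmod0 lam]
          have h12 : E (Gprev + lam • φm) ≤
              E Gprev + lam * E' Gprev φm + 2 * modS E DE lam := by
            have hid : (1 - ‖φm‖) * E Gprev +
                ‖φm‖ * (E Gprev + lam * E' Gprev y + 2 * modS E DE lam)
                = E Gprev + lam * (‖φm‖ * E' Gprev y) + ‖φm‖ * (2 * modS E DE lam) := by ring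
            rw [hEy] at hid
            linarith
          have h13 : -lam * t * A⁻¹ * a = lam * (-(t * (A⁻¹ * a))) := by ring
          linarith
      linarith
    · -- degenerate case: some supremum is not bounded above; then the infimum set
      -- is unbounded below and its infimum is 0 by convention
      push_neg at hdeg
      obtain ⟨lam0, hlam0, hnb⟩ := hdeg
      have hgnn : ∀ (u : ℝ) (p : X × X),
          0 ≤ E (p.1 + u • p.2) + E (p.1 - u • p.2) - 2 * E p.1 := by
        intro u p
        have h6 := hE.2 (mem_univ (p.1 + u • p.2)) (mem_univ (p.1 - u • p.2))
          (by norm_num : (0:ℝ) ≤ 1/2) (by norm_num : (0:ℝ) ≤ 1/2) (by norm_num)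
        have h7 : (1/2 : ℝ) • (p.1 + u • p.2) + (1/2 : ℝ) • (p.1 - u • p.2) = p.1 := by
          module
        rw [h7] at h6
        simp only [smul_eq_mul] at h6
        linarith
      have hmono : ∀ lam : ℝ, lam0 ≤ lam →
          ¬ BddAbove ((fun p : X × X => |E (p.1 + lam • p.2) + E (p.1 - lam • p.2) - 2 * E p.1|)
            '' {p : X × X | p.1 ∈ DE ∧ ‖p.2‖ = 1}) := by
        intro lam hlam hb
        apply hnb
        obtain ⟨M, hM⟩ := hb
        refine ⟨M, ?_⟩
        rintro v ⟨p, hp, rfl⟩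
        have hMp := hM (mem_image_of_mem _ hp)
        have hlampos : 0 < lam := lt_of_lt_of_le hlam0 hlam
        set θ : ℝ := lam0 / lam with hθ
        have hθ0 : 0 ≤ θ := div_nonneg hlam0.le hlampos.le
        have hθ1 : θ ≤ 1 := (div_le_one hlampos).2 hlam
        have hsc : θ • (lam • p.2) = lam0 • p.2 := by
          rw [smul_smul, hθ, div_mul_cancel₀ _ hlampos.ne']
        have hplus : E (p.1 + lam0 • p.2) ≤ (1 - θ) * E p.1 + θ * E (p.1 + lam • p.2) := by
          have h6 := hE.2 (mem_univ p.1) (mem_univ (p.1 + lam • p.2))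
            (by linarith : (0:ℝ) ≤ 1 - θ) hθ0 (by ring)
          have h7 : (1 - θ) • p.1 + θ • (p.1 + lam • p.2) = p.1 + lam0 • p.2 := by
            rw [smul_add, hsc, ← add_assoc, ← add_smul, sub_add_cancel, one_smul]
          rw [h7] at h6
          simpa [smul_eq_mul] using h6
        have hminus : E (p.1 - lam0 • p.2) ≤ (1 - θ) * E p.1 + θ * E (p.1 - lam • p.2) := by
          have h6 := hE.2 (mem_univ p.1) (mem_univ (p.1 - lam • p.2))
            (by linarith : (0:ℝ) ≤ 1 - θ) hθ0 (by ring)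
          have h7 : (1 - θ) • p.1 + θ • (p.1 - lam • p.2) = p.1 - lam0 • p.2 := by
            rw [smul_sub, hsc]; module
          rw [h7] at h6
          simpa [smul_eq_mul] using h6
        have hg0 := hgnn lam0 p
        have hgl := hgnn lam p
        have hmon : E (p.1 + lam0 • p.2) + E (p.1 - lam0 • p.2) - 2 * E p.1 ≤
            E (p.1 + lam • p.2) + E (p.1 - lam • p.2) - 2 * E p.1 := by
          have hprod := mul_le_mul_of_nonneg_right hθ1 hgl
          have hexp : θ * (E (p.1 + lam • p.2) + E (p.1 - lam • p.2) - 2 * E p.1)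
              = θ * E (p.1 + lam • p.2) + θ * E (p.1 - lam • p.2) - 2 * (θ * E p.1) := by ring
          have hexp2 : (1 - θ) * E p.1 = E p.1 - θ * E p.1 := by ring
          have hexp3 : 1 * (E (p.1 + lam • p.2) + E (p.1 - lam • p.2) - 2 * E p.1)
              = E (p.1 + lam • p.2) + E (p.1 - lam • p.2) - 2 * E p.1 := by ring
          linarith
        show |E (p.1 + lam0 • p.2) + E (p.1 - lam0 • p.2) - 2 * E p.1| ≤ M
        rw [abs_of_nonneg hg0]
        rw [abs_of_nonneg hgl] at hMp
        linarith
      have hRnb : ¬ BddBelow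
          ((fun lam => -lam * t * A⁻¹ * a + 2 * modS E DE lam) '' Set.Ici (0:ℝ)) := by
        rintro ⟨B, hB⟩
        set lam : ℝ := max lam0 ((|B| + 1) / (t * (A⁻¹ * a))) with hlamdef
        have hlamge : lam0 ≤ lam := le_max_left _ _
        have hlam0' : (0:ℝ) ≤ lam := le_trans hlam0.le hlamge
        have hmodz : modS E DE lam = 0 := by
          have hrfl : modS E DE lam = (1 / 2) *
              sSup ((fun p : X × X => |E (p.1 + lam • p.2) + E (p.1 - lam • p.2) - 2 * E p.1|)
                '' {p : X × X | p.1 ∈ DE ∧ ‖p.2‖ = 1}) := rfl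
          rw [hrfl, Real.sSup_of_not_bddAbove (hmono lam hlamge), mul_zero]
        have hBle := hB (mem_image_of_mem _ (mem_Ici.mpr hlam0'))
        rw [hmodz] at hBle
        have h14 : (|B| + 1) / (t * (A⁻¹ * a)) ≤ lam := le_max_right _ _
        have h15 : |B| + 1 ≤ lam * (t * (A⁻¹ * a)) := (div_le_iff₀ hc).1 h14
        have h16 : -lam * t * A⁻¹ * a = -(lam * (t * (A⁻¹ * a))) := by ring
        have hBabs := neg_abs_le B
        linarith
      rw [Real.sInf_of_not_bddBelow hRnb]
      linarith
end

section
/- Let ρ : [0,1] → ℝ be a nonnegative convex function with ρ(u)/u → 0 as u → 0⁺, let (α_k) be a nonnegative sequence with α_k → 0, and let v, B > 0. If a nonnegative sequence (a_m) satisfies a_m ≤ a_{m-1} + inf_{0≤λ≤1}( −λ v a_{m-1} + B ρ(λ) ) + α_m for all m ≥ 1, then a_m → 0 as m → ∞. -/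
open Set

/-- If `ρ` is nonnegative convex on `[0,1]` with `ρ(u)/u → 0` as `u → 0⁺`,
`α_k ≥ 0` with `α_k → 0`, `v, B > 0`, and a nonnegative sequence `(a_m)` satisfies
`a_m ≤ a_{m-1} + inf_{0≤λ≤1}(−λ v a_{m-1} + B ρ(λ)) + α_m` for all `m ≥ 1`,
then `a_m → 0`. -/
theorem stmt_9 (ρ : ℝ → ℝ) (hρ_conv : ConvexOn ℝ (Set.Icc (0 : ℝ) 1) ρ)
    (hρ_nonneg : ∀ u ∈ Set.Icc (0 : ℝ) 1, 0 ≤ ρ u)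
    (hρ_o : Filter.Tendsto (fun u => ρ u / u) (nhdsWithin 0 (Set.Ioi 0)) (nhds 0))
    (α : ℕ → ℝ) (hα_nonneg : ∀ k, 0 ≤ α k)
    (hα_lim : Filter.Tendsto α Filter.atTop (nhds 0))
    (v B : ℝ) (hv : 0 < v) (hB : 0 < B)
    (a : ℕ → ℝ) (ha_nonneg : ∀ m, 0 ≤ a m)
    (hrec : ∀ m : ℕ, a (m + 1) ≤ a m +
      sInf ((fun lam => -lam * v * a m + B * ρ lam) '' Set.Icc (0 : ℝ) 1) + α (m + 1)) :
    Filter.Tendsto a Filter.atTop (nhds 0) := by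
  rw [Metric.tendsto_atTop]
  intro ε hε
  -- derived pointwise recurrence
  have key : ∀ m, ∀ l ∈ Set.Icc (0:ℝ) 1,
      a (m+1) ≤ a m + (-l * v * a m + B * ρ l) + α (m+1) := by
    intro m l hl
    refine le_trans (hrec m) ?_
    have hbdd : BddBelow ((fun lam => -lam * v * a m + B * ρ lam) '' Set.Icc (0:ℝ) 1) := by
      refine ⟨-(v * a m), ?_⟩
      rintro y ⟨t, ht, rfl⟩
      dsimp only
      have h1 : 0 ≤ B * ρ t := mul_nonneg hB.le (hρ_nonneg t ht)
      nlinarith [mul_nonneg (mul_nonneg hv.le (ha_nonneg m)) (sub_nonneg.mpr ht.2)]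
    have h2 := csInf_le hbdd (Set.mem_image_of_mem _ hl)
    linarith
  -- choose a small lam
  have hc : (0:ℝ) < v * ε / (4 * B) := by positivity
  have h1 : ∀ᶠ u in nhdsWithin (0:ℝ) (Set.Ioi 0), ρ u / u < v * ε / (4 * B) :=
    hρ_o.eventually (Filter.Tendsto.eventually_lt_const hc (by exact Filter.tendsto_id) |>.mono
      (fun x hx => hx)) |>.mono (fun x hx => hx)
  have h2 : ∀ᶠ u in nhdsWithin (0:ℝ) (Set.Ioi 0), u < min 1 (1/v) :=
    Filter.eventually_iff_exists_mem.mpr ⟨Set.Iio (min 1 (1/v)),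
      mem_nhdsWithin_of_mem_nhds (Iio_mem_nhds (by positivity)), fun x hx => hx⟩
  have h3 : ∀ᶠ u in nhdsWithin (0:ℝ) (Set.Ioi 0), u ∈ Set.Ioi (0:ℝ) :=
    self_mem_nhdsWithin
  obtain ⟨lam, hr, hlt, hpos⟩ := (h1.and (h2.and h3)).exists
  obtain ⟨hlt1, hltv⟩ := lt_min_iff.mp hlt
  have hlam_pos : (0:ℝ) < lam := hpos
  have hlamv : lam * v < 1 := by
    rw [lt_div_iff₀ hv] at hltv; linarith
  have hρlam : B * ρ lam ≤ lam * v * ε / 4 := by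
    have := (div_lt_iff₀ hlam_pos).mp hr
    calc B * ρ lam ≤ B * (v * ε / (4 * B) * lam) := by nlinarith
    _ = lam * v * ε / 4 := by field_simp
  have hδpos : 0 < lam * v * ε / 4 := by positivity
  have hδε : lam * v * ε / 4 ≤ ε / 4 := by nlinarith
  -- N for α
  obtain ⟨N, hN⟩ := (Metric.tendsto_atTop.mp hα_lim) ((lam * v * ε / 4)/2) (by positivity)
  have hNα : ∀ k ≥ N, α k ≤ (lam * v * ε / 4)/2 := by
    intro k hk
    have := hN k hk
    rw [Real.dist_eq, sub_zero, abs_of_nonneg (hα_nonneg k)] at this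
    linarith
  have hlmem : lam ∈ Set.Icc (0:ℝ) 1 := ⟨hlam_pos.le, hlt1.le⟩
  have step1 : ∀ m ≥ N, ε/2 ≤ a m → a (m+1) ≤ a m - (lam * v * ε / 4)/2 := by
    intro m hm h
    have hk := key m lam hlmem
    have hα' := hNα (m+1) (by omega)
    have : lam * v * (ε/2) ≤ lam * v * a m := by nlinarith
    linarith
  have step2 : ∀ m ≥ N, a m ≤ ε/2 → a (m+1) ≤ ε/2 + 3*(lam * v * ε / 4)/2 := by
    intro m hm h
    have hk := key m lam hlmem
    have hα' := hNα (m+1) (by omega)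
    have : 0 ≤ lam * v * a m := mul_nonneg (mul_nonneg hlam_pos.le hv.le) (ha_nonneg m)
    nlinarith
  -- there is M ≥ N with a M ≤ ε/2
  have exM : ∃ M, N ≤ M ∧ a M ≤ ε/2 := by
    by_contra hcon
    push_neg at hcon
    have hdec : ∀ k : ℕ, a (N + k) ≤ a N - k * ((lam * v * ε / 4)/2) := by
      intro k
      induction k with
      | zero => simp
      | succ n ih =>
        have hM := hcon (N + n) (by omega)
        have := step1 (N + n) (by omega) hM.le
        have : a (N + (n+1)) ≤ a (N + n) - (lam * v * ε / 4)/2 := by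
          rw [show N + (n+1) = (N + n) + 1 by ring]; exact this
        push_cast
        linarith
    obtain ⟨k, hk⟩ := exists_nat_gt (a N / ((lam * v * ε / 4)/2))
    have hk' : a N < k * ((lam * v * ε / 4)/2) := by
      rw [div_lt_iff₀ (by positivity)] at hk; linarith
    have := hdec k
    have := ha_nonneg (N + k)
    linarith
  obtain ⟨M, hMN, hM⟩ := exM
  have inv : ∀ m, M ≤ m → a m ≤ ε/2 + 3*(lam * v * ε / 4)/2 := by
    intro m hm
    induction m, hm using Nat.le_induction with
    | base => linarith
    | succ n hn ih =>
      rcases le_or_gt (a n) (ε/2) with h | h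
      · exact step2 n (hMN.trans hn) h
      · have := step1 n (hMN.trans hn) h.le
        linarith
  refine ⟨M, fun n hn => ?_⟩
  have := inv n hn
  rw [Real.dist_eq, sub_zero, abs_of_nonneg (ha_nonneg n)]
  linarith
end

section
/- Let q ∈ (1,2], v ∈ (0,1], B > 0, c > 0. If a nonnegative sequence (a_m) satisfies a_m ≤ a_{m-1} + inf_{0≤λ≤1}( −λ v a_{m-1} + B λ^q ) + α_m with α_m ≤ c m^{−q} for all m ≥ 1, then there exists a constant C depending only on q, B, a_0, c such that a_m ≤ C v^{−q} m^{1−q} for all m ≥ 1. -/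
open Set

/-- If a nonnegative sequence satisfies
`a_m ≤ a_{m-1} + inf_{0≤λ≤1}(−λ v a_{m-1} + B λ^q) + α_m` with `α_m ≤ c m^{−q}`,
`q ∈ (1,2]`, `v ∈ (0,1]`, `B > 0`, `c > 0`, then `a_m ≤ C v^{−q} m^{1−q}`
for a constant `C = C(q, B, a_0, c)`. -/
theorem stmt_10 (q v B c : ℝ) (hq : q ∈ Set.Ioc (1 : ℝ) 2) (hv : v ∈ Set.Ioc (0 : ℝ) 1)
    (hB : 0 < B) (hc : 0 < c)
    (a α : ℕ → ℝ) (ha_nonneg : ∀ m, 0 ≤ a m)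
    (hα : ∀ m : ℕ, 1 ≤ m → α m ≤ c * (m : ℝ) ^ (-q))
    (hrec : ∀ m : ℕ, a (m + 1) ≤ a m +
      sInf ((fun lam => -lam * v * a m + B * lam ^ q) '' Set.Icc (0 : ℝ) 1) + α (m + 1)) :
    ∃ C : ℝ, 0 < C ∧ ∀ m : ℕ, 1 ≤ m → a m ≤ C * v ^ (-q) * (m : ℝ) ^ (1 - q) := by
  obtain ⟨hq1, hq2⟩ := hq
  obtain ⟨hv0, hv1⟩ := hv
  have hq0 : (0:ℝ) < q := by linarith
  -- bounded below
  have hbdd : ∀ m, BddBelow ((fun lam => -lam * v * a m + B * lam ^ q) '' Set.Icc (0:ℝ) 1) := by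
    intro m
    refine ⟨-(v * a m), ?_⟩
    rintro x ⟨lam, ⟨h0, h1⟩, rfl⟩
    have h1' : lam * v * a m ≤ 1 * v * a m :=
      mul_le_mul_of_nonneg_right (mul_le_mul_of_nonneg_right h1 hv0.le) (ha_nonneg m)
    have hBl : (0:ℝ) ≤ B * lam ^ q := mul_nonneg hB.le (Real.rpow_nonneg h0 q)
    simp only
    nlinarith
  -- inf ≤ 0 (take lam = 0)
  have hinf0 : ∀ m, sInf ((fun lam => -lam * v * a m + B * lam ^ q) '' Set.Icc (0:ℝ) 1) ≤ 0 := by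
    intro m
    have hmem : (0:ℝ) ∈ (fun lam => -lam * v * a m + B * lam ^ q) '' Set.Icc (0:ℝ) 1 := by
      refine ⟨0, ⟨le_refl _, zero_le_one⟩, ?_⟩
      simp [Real.zero_rpow (by positivity : q ≠ 0)]
    exact csInf_le (hbdd m) hmem
  -- α m ≤ c for m ≥ 1
  have hαc : ∀ m : ℕ, 1 ≤ m → α m ≤ c := by
    intro m hm
    have h1 := hα m hm
    have hle : ((m:ℝ)) ^ (-q) ≤ 1 :=
      Real.rpow_le_one_of_one_le_of_nonpos (by exact_mod_cast hm) (by linarith)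
    nlinarith
  -- growth bound
  have hgrow : ∀ m : ℕ, a m ≤ a 0 + c * m := by
    intro m
    induction m with
    | zero => simp
    | succ n ih =>
      have h1 := hrec n
      have h2 := hinf0 n
      have h3 := hαc (n+1) (by omega)
      push_cast
      push_cast at ih
      nlinarith
  set M : ℕ := ⌈q / v⌉₊ with hMdef
  have hMq : q / v ≤ (M:ℝ) := Nat.le_ceil _
  have hqv : q ≤ q / v := by rw [le_div_iff₀ hv0]; nlinarith
  have hMR : q ≤ (M:ℝ) := le_trans hqv hMq
  have hM0 : (0:ℝ) < (M:ℝ) := by linarith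
  have hM1 : 1 ≤ M := by exact_mod_cast (by linarith : (1:ℝ) ≤ (M:ℝ))
  set D : ℝ := B * q ^ q * v ^ (-q) + c with hDdef
  have hD : 0 < D := by positivity
  set K : ℝ := max ((a 0 + c * M) * (M:ℝ) ^ (q-1)) D with hKdef
  have hK : 0 < K := lt_of_lt_of_le hD (le_max_right _ _)
  -- base bound for 1 ≤ m ≤ M
  have hbase : ∀ m : ℕ, 1 ≤ m → m ≤ M → a m ≤ K * (m:ℝ) ^ (1-q) := by
    intro m hm1 hmM
    have hmR : (1:ℝ) ≤ (m:ℝ) := by exact_mod_cast hm1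
    have hmMR : (m:ℝ) ≤ (M:ℝ) := by exact_mod_cast hmM
    have h1 : a m ≤ a 0 + c * M := by
      have := hgrow m
      nlinarith
    have h2 : a 0 + c * M = ((a 0 + c * M) * (M:ℝ) ^ (q-1)) * (M:ℝ) ^ (1-q) := by
      rw [mul_assoc, ← Real.rpow_add hM0]
      norm_num
    have h3 : ((a 0 + c * M) * (M:ℝ) ^ (q-1)) * (M:ℝ) ^ (1-q) ≤ K * (M:ℝ) ^ (1-q) :=
      mul_le_mul_of_nonneg_right (le_max_left _ _) (Real.rpow_nonneg hM0.le _)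
    have h4 : (M:ℝ) ^ (1-q) ≤ (m:ℝ) ^ (1-q) :=
      Real.rpow_le_rpow_of_nonpos (by linarith) hmMR (by linarith)
    calc a m ≤ a 0 + c * M := h1
      _ = ((a 0 + c * M) * (M:ℝ) ^ (q-1)) * (M:ℝ) ^ (1-q) := h2
      _ ≤ K * (M:ℝ) ^ (1-q) := h3
      _ ≤ K * (m:ℝ) ^ (1-q) := mul_le_mul_of_nonneg_left h4 hK.le
  -- main induction
  have key : ∀ m : ℕ, 1 ≤ m → a m ≤ K * (m:ℝ) ^ (1-q) := by
    intro m
    induction m with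
    | zero => omega
    | succ n ih =>
      intro _
      by_cases hcase : n + 1 ≤ M
      · exact hbase (n+1) (by omega) hcase
      · -- step case: n ≥ M ≥ 1
        have hnM : M ≤ n := by omega
        have hn1 : 1 ≤ n := le_trans hM1 hnM
        have ihn := ih hn1
        have hnR : (M:ℝ) ≤ (n:ℝ) := by exact_mod_cast hnM
        have hn0 : (0:ℝ) < (n:ℝ) := by linarith
        have hqn : q ≤ (n:ℝ) := le_trans hMR hnR
        set x : ℝ := (n:ℝ) + 1 with hxdef
        have hx0 : (0:ℝ) < x := by positivity
        set lam : ℝ := q / (v * x) with hlamdef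
        have hlam0 : 0 ≤ lam := by positivity
        have hlam1 : lam ≤ 1 := by
          rw [div_le_one (by positivity)]
          have : q / v ≤ x := by linarith [le_trans hMq hnR]
          calc q = (q / v) * v := by field_simp
            _ ≤ x * v := mul_le_mul_of_nonneg_right this hv0.le
            _ = v * x := mul_comm _ _
        -- inf ≤ value at lam
        have hinf : sInf ((fun l => -l * v * a n + B * l ^ q) '' Set.Icc (0:ℝ) 1)
            ≤ -lam * v * a n + B * lam ^ q :=
          csInf_le (hbdd n) ⟨lam, ⟨hlam0, hlam1⟩, rfl⟩
        have hrecn := hrec n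
        have hαn : α (n+1) ≤ c * x ^ (-q) := by
          have := hα (n+1) (by omega)
          push_cast at this
          exact this
        have hlamv : lam * v = q / x := by
          field_simp [hlamdef]
          rw [hlamdef, div_mul_eq_mul_div, div_mul_eq_mul_div, div_eq_iff (by positivity)]; ring
        -- lam ^ q = q^q * v^(-q) * x^(-q)
        have hlamq : lam ^ q = q ^ q * v ^ (-q) * x ^ (-q) := by
          rw [hlamdef, Real.div_rpow hq0.le (by positivity), Real.mul_rpow hv0.le hx0.le,
            Real.rpow_neg hv0.le, Real.rpow_neg hx0.le]
          field_simp
        -- Bernoulli: 1 - q/x ≤ ((n:ℝ)/x)^q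
        have hbern : 1 - q / x ≤ ((n:ℝ) / x) ^ q := by
          have h := one_add_mul_self_le_rpow_one_add (s := -(1/x))
            (by rw [neg_le_neg_iff]; rw [div_le_one hx0]; linarith) (le_of_lt hq1)
          have e1 : 1 + -(1/x) = (n:ℝ)/x := by
            rw [hxdef]; field_simp; ring
          have e2 : 1 + q * -(1/x) = 1 - q / x := by ring
          rw [e1, e2] at h
          exact h
        have hfrac : ((n:ℝ) / x) ^ q * ((n:ℝ) ^ (1-q)) = (n:ℝ) * x ^ (-q) := by
          rw [Real.div_rpow hn0.le hx0.le, Real.rpow_neg hx0.le]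
          rw [div_mul_eq_mul_div, ← Real.rpow_add hn0]
          norm_num
          exact div_eq_mul_inv _ _
        have hcoef : 0 ≤ 1 - q / x := by
          have : q / x ≤ 1 := by rw [div_le_one hx0]; linarith
          linarith
        -- chain
        have step1 : a (n+1) ≤ (1 - q / x) * a n + B * lam ^ q + c * x ^ (-q) := by
          have : a (n+1) ≤ a n + (-lam * v * a n + B * lam ^ q) + α (n+1) := by
            linarith [hrecn, hinf]
          have e : a n + (-lam * v * a n + B * lam ^ q) = (1 - lam * v) * a n + B * lam ^ q := by
            ring
          rw [e, hlamv] at this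
          linarith
        have step2 : (1 - q / x) * a n ≤ (1 - q / x) * (K * (n:ℝ) ^ (1-q)) :=
          mul_le_mul_of_nonneg_left ihn hcoef
        have step3 : (1 - q / x) * (K * (n:ℝ) ^ (1-q)) ≤ ((n:ℝ)/x) ^ q * (K * (n:ℝ) ^ (1-q)) :=
          mul_le_mul_of_nonneg_right hbern
            (mul_nonneg hK.le (Real.rpow_nonneg hn0.le _))
        have step4 : ((n:ℝ)/x) ^ q * (K * (n:ℝ) ^ (1-q)) = K * (n:ℝ) * x ^ (-q) := by
          have e : ((n:ℝ)/x) ^ q * (K * (n:ℝ) ^ (1-q)) = K * (((n:ℝ)/x) ^ q * (n:ℝ) ^ (1-q)) := by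
            ring
          rw [e, hfrac]; ring
        have hxq : x ^ (1-q) = x * x ^ (-q) := by
          rw [show (1:ℝ) - q = 1 + -q by ring, Real.rpow_add hx0, Real.rpow_one]
        have hDK : D ≤ K := le_max_right _ _
        have hxqpos : 0 < x ^ (-q) := Real.rpow_pos_of_pos hx0 _
        have final : a (n+1) ≤ K * x ^ (1-q) := by
          have hBlam : B * lam ^ q = B * q ^ q * v ^ (-q) * x ^ (-q) := by
            rw [hlamq]; ring
          have hDx : D * x ^ (-q) = B * q ^ q * v ^ (-q) * x ^ (-q) + c * x ^ (-q) := by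
            rw [hDdef]; ring
          have : a (n+1) ≤ K * (n:ℝ) * x ^ (-q) + D * x ^ (-q) := by
            linarith [step1, step2, step3, step4.le, step4.ge, hBlam.le, hBlam.ge, hDx.le, hDx.ge]
          have h2 : K * (n:ℝ) * x ^ (-q) + D * x ^ (-q) ≤ K * (n:ℝ) * x ^ (-q) + K * x ^ (-q) := by
            have := mul_le_mul_of_nonneg_right hDK hxqpos.le
            linarith
          have h3 : K * (n:ℝ) * x ^ (-q) + K * x ^ (-q) = K * x ^ (1-q) := by
            rw [hxq, hxdef]; ring
          linarith
        have : ((n:ℕ)+1 : ℝ) = x := by rw [hxdef]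
        push_cast
        rw [this]
        exact final
  refine ⟨K * v ^ q, by positivity, ?_⟩
  intro m hm
  have hvv : v ^ q * v ^ (-q) = 1 := by
    rw [← Real.rpow_add hv0]; norm_num
  calc a m ≤ K * (m:ℝ) ^ (1-q) := key m hm
    _ = K * v ^ q * v ^ (-q) * (m:ℝ) ^ (1-q) := by
        rw [mul_assoc K, hvv, mul_one]
end

section
/- Let E : X → ℝ be a uniformly smooth convex function on the bounded level set D_E = {x : E(x) ≤ E(0)} of a Banach space X, with modulus ρ(u) := ρ(E,D_E,u), and let (t_m) ⊆ [0,1] be a weakness sequence. For θ ∈ (0,θ₀], let ξ_m(ρ,τ,θ) be the unique solution of ρ(u) = θ t_m u. If Σ_{m=1}^∞ t_m ξ_m(ρ,τ,θ) = ∞ for all θ ∈ (0,θ₀], then for any algorithm in the class WBGA(co), lim_{m→∞} E(G_m) = inf_{x∈D_E} E(x). -/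
open Set

lemma grad_ineq_aux {X : Type*} [NormedAddCommGroup X] [NormedSpace ℝ X]
    {E : X → ℝ} (hE : ConvexOn ℝ Set.univ E) {E' : X → (X →L[ℝ] ℝ)}
    (hdiff : ∀ x, HasFDerivAt E (E' x) x) (x z : X) :
    E x + E' x (z - x) ≤ E z := by
  set g : ℝ → X := fun s => x + s • (z - x) with hg
  have hgd : HasDerivAt g (z - x) 0 := by
    simpa [hg] using (((hasDerivAt_id (0:ℝ)).smul_const (z - x)).const_add x)
  have hfd : HasDerivAt (E ∘ g) (E' x (z - x)) 0 := by
    have hx0 : g 0 = x := by simp [hg]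
    exact HasFDerivAt.comp_hasDerivAt 0 (by rw [hx0]; exact hdiff x) hgd
  have hconv : ConvexOn ℝ Set.univ (E ∘ g) := by
    refine ⟨convex_univ, fun a _ b _ wa wb hwa hwb hab => ?_⟩
    have key : g (wa • a + wb • b) = wa • g a + wb • g b := by
      simp only [hg, smul_eq_mul]
      match_scalars <;> ring_nf <;> nlinarith [hab]
    simp only [Function.comp_apply, key]
    exact hE.2 (mem_univ _) (mem_univ _) hwa hwb hab
  have := hconv.le_slope_of_hasDerivAt (mem_univ (0:ℝ)) (mem_univ 1) one_pos hfd
  have hs : slope (E ∘ g) 0 1 = E z - E x := by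
    simp [slope, hg]
  rw [hs] at this
  linarith

set_option maxHeartbeats 2000000 in
/-- Convergence theorem for the class WBGA(co): if for every `θ ∈ (0,θ₀]` the series
`∑ t_m ξ_m(ρ,τ,θ)` diverges, where `ξ_m` solves `ρ(u) = θ t_m u`, then
`E(G_m) → inf_{x ∈ D_E} E(x)`. -/
theorem stmt_13 {X : Type*} [NormedAddCommGroup X] [NormedSpace ℝ X] [CompleteSpace X]
    (E : X → ℝ) (hE : ConvexOn ℝ Set.univ E)
    (E' : X → (X →L[ℝ] ℝ)) (hdiff : ∀ x, HasFDerivAt E (E' x) x)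
    (Dic : Set X) (hDnorm : ∀ g ∈ Dic, ‖g‖ ≤ 1)
    (hDdense : Dense (Submodule.span ℝ Dic : Set X))
    (hDsymm : ∀ g ∈ Dic, -g ∈ Dic)
    (DE : Set X) (hDE : DE = {x : X | E x ≤ E 0}) (hbdd : Bornology.IsBounded DE)
    -- uniform smoothness of E on DE
    (husmooth : Filter.Tendsto (fun u => modS E DE u / u)
      (nhdsWithin 0 (Set.Ioi 0)) (nhds 0))
    (θ₀ : ℝ) (hθ₀ : θ₀ ∈ Set.Ioc (0 : ℝ) 1) (hρθ₀ : 1 ≤ modS E DE (1 / θ₀))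
    (t : ℕ → ℝ) (ht : ∀ m, t m ∈ Set.Icc (0 : ℝ) 1)
    -- ξ θ m is the unique positive solution of ρ(u) = θ t_m u
    (ξ : ℝ → ℕ → ℝ)
    (hξ : ∀ θ ∈ Set.Ioc (0 : ℝ) θ₀, ∀ m : ℕ,
      0 < ξ θ m ∧ ξ θ m ≤ 1 / θ₀ ∧ modS E DE (ξ θ m) = θ * t m * ξ θ m)
    (hdiv : ∀ θ ∈ Set.Ioc (0 : ℝ) θ₀,
      Filter.Tendsto (fun N => ∑ m ∈ Finset.Icc 1 N, t m * ξ θ m)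
        Filter.atTop Filter.atTop)
    (G φ : ℕ → X) (hG0 : G 0 = 0) (hφD : ∀ m, 1 ≤ m → φ m ∈ Dic)
    (hgreedy : ∀ m : ℕ, 1 ≤ m →
      (-(E' (G (m - 1)))) (φ m) ≥ t m * sSup ((fun g => (-(E' (G (m - 1)))) g) '' Dic))
    (hreduction : ∀ m : ℕ, 1 ≤ m →
      E (G m) ≤ sInf ((fun lam => E (G (m - 1) + lam • φ m)) '' Set.Ici (0 : ℝ)))
    (hbio : ∀ m : ℕ, 1 ≤ m → E' (G m) (G m) = 0) :
    Filter.Tendsto (fun m => E (G m)) Filter.atTop (nhds (sInf (E '' DE))) := by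
  obtain ⟨hθ₀pos, hθ₀le⟩ := hθ₀
  set ub : ℝ := 1 / θ₀ with hubdef
  have hubpos : 0 < ub := by positivity
  set Sset : ℝ → Set ℝ := fun u =>
    (fun p : X × X => |E (p.1 + u • p.2) + E (p.1 - u • p.2) - 2 * E p.1|)
      '' {p : X × X | p.1 ∈ DE ∧ ‖p.2‖ = 1} with hSset
  have hmod : ∀ u, modS E DE u = (1/2) * sSup (Sset u) := fun u => rfl
  have h0DE : (0:X) ∈ DE := by rw [hDE]; exact Set.mem_setOf_eq ▸ le_rfl
  have hgrad : ∀ x z : X, E x + E' x (z - x) ≤ E z := grad_ineq_aux hE hdiff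
  -- global lower bound for E
  obtain ⟨R, hR⟩ := hbdd.subset_closedBall (0 : X)
  set B : ℝ := E 0 - ‖E' 0‖ * R with hBdef
  have hB : ∀ x : X, B ≤ E x := by
    intro x
    by_cases hx : x ∈ DE
    · have h1 : E 0 + E' 0 (x - 0) ≤ E x := hgrad 0 x
      have h2 : ‖x‖ ≤ R := by simpa using hR hx
      have h3 : |E' 0 (x - 0)| ≤ ‖E' 0‖ * R := by
        calc |E' 0 (x - 0)| ≤ ‖E' 0‖ * ‖x - 0‖ := (E' 0).le_opNorm _
          _ ≤ ‖E' 0‖ * R := by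
              have : ‖x - 0‖ ≤ R := by simpa using h2
              exact mul_le_mul_of_nonneg_left this (norm_nonneg _)
      have := abs_le.mp h3
      simp only [hBdef]; linarith
    · rw [hDE] at hx
      simp only [mem_setOf_eq, not_le] at hx
      have hRnn : 0 ≤ R := by
        have := hR h0DE
        simpa using this
      have : 0 ≤ ‖E' 0‖ * R := mul_nonneg (norm_nonneg _) hRnn
      simp only [hBdef]; linarith
  -- a unit vector exists
  obtain ⟨y₀, hy₀⟩ : ∃ y : X, ‖y‖ = 1 := by
    by_contra h
    push_neg at h
    have hempty : Sset ub = ∅ := by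
      simp only [hSset, image_eq_empty]
      ext p; simp only [mem_setOf_eq, mem_empty_iff_false, iff_false, not_and]
      exact fun _ => h p.2
    have : modS E DE ub = 0 := by rw [hmod, hempty, Real.sSup_empty, mul_zero]
    rw [hubdef] at this
    linarith [hρθ₀]
  -- nonnegativity of the second difference
  have hnonneg : ∀ (u : ℝ) (x : X), ∀ y : X, ‖y‖ = 1 →
      0 ≤ E (x + u • y) + E (x - u • y) - 2 * E x := by
    intro u x y hy
    have hmid : (1/2 : ℝ) • (x + u • y) + (1/2 : ℝ) • (x - u • y) = x := by module
    have := hE.2 (mem_univ (x + u • y)) (mem_univ (x - u • y))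
      (by norm_num : (0:ℝ) ≤ 1/2) (by norm_num : (0:ℝ) ≤ 1/2) (by norm_num)
    rw [hmid] at this
    simp only [smul_eq_mul] at this
    linarith
  -- scaling: second difference is monotone in u over [0, u]
  have hscale : ∀ u u' : ℝ, 0 < u → 0 ≤ u' → u' ≤ u → ∀ x : X, ∀ y : X, ‖y‖ = 1 →
      E (x + u' • y) + E (x - u' • y) - 2 * E x
        ≤ E (x + u • y) + E (x - u • y) - 2 * E x := by
    intro u u' hu hu' hle x y hy
    set a : ℝ := u' / u with hadef
    have ha0 : 0 ≤ a := div_nonneg hu' hu.le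
    have ha1 : a ≤ 1 := (div_le_one hu).mpr hle
    have hb0 : 0 ≤ 1 - a := by linarith
    have hau : a * u = u' := div_mul_cancel₀ u' hu.ne'
    have key1 : a • (x + u • y) + (1 - a) • x = x + u' • y := by
      rw [← hau]; module
    have key2 : a • (x - u • y) + (1 - a) • x = x - u' • y := by
      rw [← hau]; module
    have h1 := hE.2 (mem_univ (x + u • y)) (mem_univ x) ha0 hb0 (by ring)
    have h2 := hE.2 (mem_univ (x - u • y)) (mem_univ x) ha0 hb0 (by ring)
    rw [key1] at h1
    rw [key2] at h2
    simp only [smul_eq_mul] at h1 h2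
    have hnn := hnonneg u x y hy
    nlinarith
  -- if the modulus is positive then the sup-set is bounded above
  have hbdd_of_pos : ∀ u : ℝ, 0 < modS E DE u → BddAbove (Sset u) := by
    intro u h
    by_contra hb
    rw [hmod, Real.sSup_of_not_bddAbove hb, mul_zero] at h
    exact lt_irrefl 0 h
  -- the key modulus estimate
  have hE_le_mod : ∀ u : ℝ, 0 < u → BddAbove (Sset u) → ∀ u', 0 ≤ u' → u' ≤ u →
      ∀ x ∈ DE, ∀ y : X, ‖y‖ = 1 →
      E (x + u' • y) + E (x - u' • y) - 2 * E x ≤ 2 * modS E DE u := by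
    intro u hu hbA u' hu' hle x hx y hy
    have hmem : |E (x + u • y) + E (x - u • y) - 2 * E x| ∈ Sset u := by
      exact ⟨(x, y), ⟨hx, hy⟩, rfl⟩
    have h1 : |E (x + u • y) + E (x - u • y) - 2 * E x| ≤ sSup (Sset u) :=
      le_csSup hbA hmem
    rw [abs_of_nonneg (hnonneg u x y hy)] at h1
    have h2 := hscale u u' hu hu' hle x y hy
    rw [hmod]
    linarith
  have hρnonneg : ∀ u : ℝ, BddAbove (Sset u) → 0 ≤ modS E DE u := by
    intro u hbA
    have hmem : |E ((0:X) + u • y₀) + E ((0:X) - u • y₀) - 2 * E 0| ∈ Sset u :=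
      ⟨((0:X), y₀), ⟨h0DE, hy₀⟩, rfl⟩
    have := le_csSup hbA hmem
    have h0 : (0:ℝ) ≤ |E ((0:X) + u • y₀) + E ((0:X) - u • y₀) - 2 * E 0| := abs_nonneg _
    rw [hmod]
    linarith
  -- the smoothness inequality
  have hsmooth : ∀ u : ℝ, 0 < u → BddAbove (Sset u) → ∀ u', 0 < u' → u' ≤ u →
      ∀ x ∈ DE, ∀ g : X, ‖g‖ ≤ 1 →
      E (x + u' • g) ≤ E x + u' * (E' x g) + 2 * modS E DE u := by
    intro u hu hbA u' hu' hle x hx g hgle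
    rcases eq_or_ne g 0 with rfl | hg
    · have := hρnonneg u hbA
      simp only [smul_zero, add_zero, map_zero, mul_zero]
      linarith
    · have hgpos : 0 < ‖g‖ := norm_pos_iff.mpr hg
      set y : X := ‖g‖⁻¹ • g with hydef
      have hy : ‖y‖ = 1 := by
        rw [hydef, norm_smul, norm_inv, norm_norm, inv_mul_cancel₀ hgpos.ne']
      set u'' : ℝ := u' * ‖g‖ with hu''def
      have hu''pos : 0 < u'' := mul_pos hu' hgpos
      have hu''le : u'' ≤ u := by
        calc u'' = u' * ‖g‖ := rfl
          _ ≤ u' * 1 := mul_le_mul_of_nonneg_left hgle hu'.le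
          _ = u' := mul_one _
          _ ≤ u := hle
      have hxy : u'' • y = u' • g := by
        rw [hydef, hu''def, smul_smul, mul_assoc, mul_inv_cancel₀ hgpos.ne', mul_one]
      have h1 := hE_le_mod u hu hbA u'' hu''pos.le hu''le x hx y hy
      have h2 : E x - E' x (u'' • y) ≤ E (x - u'' • y) := by
        have := hgrad x (x - u'' • y)
        have harg : x - u'' • y - x = -(u'' • y) := by abel
        rw [harg, map_neg] at this
        linarith
      rw [hxy] at h1 h2
      have h3 : E' x (u' • g) = u' * E' x g := by
        rw [map_smul, smul_eq_mul]
      rw [h3] at h2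
      linarith
  -- G m stays in DE and E (G m) is antitone
  have hstep : ∀ m : ℕ, 1 ≤ m → E (G m) ≤ E (G (m-1)) := by
    intro m hm
    have hmem : E (G (m-1)) ∈ (fun lam => E (G (m - 1) + lam • φ m)) '' Set.Ici (0:ℝ) := by
      exact ⟨0, Set.self_mem_Ici, by simp⟩
    have hbb : BddBelow ((fun lam => E (G (m - 1) + lam • φ m)) '' Set.Ici (0:ℝ)) := by
      refine ⟨B, fun v hv => ?_⟩
      obtain ⟨lam, _, rfl⟩ := hv
      exact hB _
    exact (hreduction m hm).trans (csInf_le hbb hmem)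
  have hmono : ∀ m : ℕ, E (G (m+1)) ≤ E (G m) := by
    intro m
    have := hstep (m+1) (Nat.le_add_left 1 m)
    simpa using this
  have hanti : Antitone (fun m => E (G m)) := antitone_nat_of_succ_le hmono
  have hGDE : ∀ m : ℕ, G m ∈ DE := by
    intro m
    rw [hDE]
    have : E (G m) ≤ E (G 0) := hanti (Nat.zero_le m)
    rw [hG0] at this
    exact this
  -- infimum setup
  set a : ℝ := sInf (E '' DE) with hadef
  have hEDEne : (E '' DE).Nonempty := ⟨E 0, 0, h0DE, rfl⟩
  have hEDEbb : BddBelow (E '' DE) := ⟨B, fun v hv => by obtain ⟨x, _, rfl⟩ := hv; exact hB x⟩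
  have ha_le : ∀ m, a ≤ E (G m) := fun m => csInf_le hEDEbb ⟨G m, hGDE m, rfl⟩
  have hbbrange : BddBelow (range fun m => E (G m)) :=
    ⟨B, fun v hv => by obtain ⟨m, rfl⟩ := hv; exact hB _⟩
  have hconv : Filter.Tendsto (fun m => E (G m)) Filter.atTop (nhds (⨅ m, E (G m))) :=
    tendsto_atTop_ciInf hanti hbbrange
  set L : ℝ := ⨅ m, E (G m) with hLdef
  have haL : a ≤ L := le_ciInf ha_le
  have hLle : ∀ m, L ≤ E (G m) := fun m => ciInf_le hbbrange m
  -- It suffices to show L = a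
  suffices hLa : L = a by rw [← hLa]; exact hconv
  by_contra hne
  have he : 0 < L - a := by
    rcases lt_or_eq_of_le haL with h | h
    · linarith
    · exact absurd h.symm hne
  set e : ℝ := L - a with hedef
  -- bounded above at ub, uniform bound M on the derivative over DE
  have hbAub : BddAbove (Sset ub) := hbdd_of_pos ub (by rw [hubdef]; linarith)
  set M₀ : ℝ := (2 * E 0 + 2 * modS E DE ub - 2 * B) / ub with hM₀def
  set M : ℝ := max M₀ 1 with hMdef
  have hMpos : 0 < M := lt_of_lt_of_le one_pos (le_max_right _ _)
  have hM : ∀ x ∈ DE, ∀ z : X, E' x z ≤ M * ‖z‖ := by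
    intro x hx z
    rcases eq_or_ne z 0 with rfl | hz
    · simp
    · have hzpos : 0 < ‖z‖ := norm_pos_iff.mpr hz
      set y : X := ‖z‖⁻¹ • z with hydef
      have hy : ‖y‖ = 1 := by
        rw [hydef, norm_smul, norm_inv, norm_norm, inv_mul_cancel₀ hzpos.ne']
      have h1 := hE_le_mod ub hubpos hbAub ub hubpos.le le_rfl x hx y hy
      have h2 : E x + E' x (ub • y) ≤ E (x + ub • y) := by
        have := hgrad x (x + ub • y)
        have harg : x + ub • y - x = ub • y := by abel
        rwa [harg] at this
      have h3 : B ≤ E (x - ub • y) := hB _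
      have h4 : E x ≤ E 0 := by rw [hDE] at hx; exact hx
      have h6 : E' x (ub • y) = ub * E' x y := by rw [map_smul, smul_eq_mul]
      rw [h6] at h2
      have hB0 : B ≤ E 0 := hB 0
      have h7 : ub * E' x y ≤ 2 * E 0 + 2 * modS E DE ub - 2 * B := by linarith
      have h8 : E' x y ≤ M₀ := by
        rw [hM₀def, le_div_iff₀ hubpos]
        linarith [mul_comm (E' x y) ub]
      have h9 : E' x z = ‖z‖ * E' x y := by
        rw [hydef, map_smul, smul_eq_mul]
        field_simp
      rw [h9]
      calc ‖z‖ * E' x y ≤ ‖z‖ * M₀ := mul_le_mul_of_nonneg_left h8 hzpos.le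
        _ ≤ ‖z‖ * M := mul_le_mul_of_nonneg_left (le_max_left _ _) hzpos.le
        _ = M * ‖z‖ := mul_comm _ _
  have hMabs : ∀ x ∈ DE, ∀ z : X, |E' x z| ≤ M * ‖z‖ := by
    intro x hx z
    rw [abs_le]
    constructor
    · have := hM x hx (-z)
      rw [map_neg] at this
      simp only [norm_neg] at this
      linarith
    · exact hM x hx z
  -- choose f ∈ DE with E f < a + e/2
  obtain ⟨fv, ⟨f, hfDE, rfl⟩, hflt⟩ := Real.lt_sInf_add_pos hEDEne (half_pos he)
  -- ψ_k f ≥ e/2 for all k, where ψ_k := -E'(G k)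
  have hbio' : ∀ k : ℕ, E' (G k) (G k) = 0 := by
    intro k
    rcases Nat.eq_zero_or_pos k with rfl | hk
    · rw [hG0]; simp
    · exact hbio k hk
  have hψf : ∀ k : ℕ, e / 2 ≤ (-(E' (G k))) f := by
    intro k
    have h1 : E (G k) + E' (G k) (f - G k) ≤ E f := hgrad (G k) f
    have h2 : E' (G k) (f - G k) = E' (G k) f - E' (G k) (G k) := by
      rw [map_sub]
    rw [h2, hbio' k, sub_zero] at h1
    have h3 : L ≤ E (G k) := hLle k
    have : E' (G k) f ≤ E f - E (G k) := by linarith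
    have h4 : E f - E (G k) ≤ (a + e/2) - L := by
      have := hflt
      rw [← hadef] at this
      linarith
    simp only [ContinuousLinearMap.neg_apply]
    rw [hedef] at *
    linarith
  -- approximate f from the span
  have hdist : ∃ f' ∈ (Submodule.span ℝ Dic : Set X), ‖f - f'‖ < e / (4 * M) := by
    have hmem := hDdense f
    rw [Metric.mem_closure_iff] at hmem
    obtain ⟨f', hf', hd⟩ := hmem (e / (4 * M)) (by positivity)
    exact ⟨f', hf', by rwa [dist_eq_norm] at hd⟩
  obtain ⟨f', hf'span, hf'close⟩ := hdist
  have hψf' : ∀ k : ℕ, e / 4 ≤ (-(E' (G k))) f' := by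
    intro k
    have h1 := hψf k
    have h2 : |(-(E' (G k))) (f - f')| ≤ M * ‖f - f'‖ := by
      have h := hMabs (G k) (hGDE k) (f - f')
      rw [ContinuousLinearMap.neg_apply, abs_neg]
      exact h
    have h3 : M * ‖f - f'‖ ≤ M * (e / (4 * M)) := 
      mul_le_mul_of_nonneg_left hf'close.le hMpos.le
    have h4 : M * (e / (4 * M)) = e / 4 := by field_simp
    have h5 : (-(E' (G k))) f' = (-(E' (G k))) f - (-(E' (G k))) (f - f') := by
      rw [map_sub]; ring
    rw [h5]
    have := abs_le.mp h2
    linarith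
  -- representation of f'
  obtain ⟨c, hcsupp, hcsum⟩ := Submodule.mem_span_set.mp hf'span
  set A : ℝ := ∑ g ∈ c.support, |c g| with hAdef
  have hA0 : 0 ≤ A := Finset.sum_nonneg fun g _ => abs_nonneg _
  have hApos : 0 < A := by
    rcases lt_or_eq_of_le hA0 with h | h
    · exact h
    · exfalso
      have hc0 : ∀ g ∈ c.support, c g = 0 := by
        intro g hg
        have := Finset.sum_eq_zero_iff_of_nonneg (fun g _ => abs_nonneg (c g)) |>.mp h.symm g hg
        exact abs_eq_zero.mp this
      have : f' = 0 := by
        rw [← hcsum, Finsupp.sum]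
        apply Finset.sum_eq_zero
        intro g hg
        rw [hc0 g hg, zero_smul]
      have h2 := hψf' 0
      rw [this, map_zero] at h2
      linarith
  -- the sup over the dictionary is bounded below
  have hSupD : ∀ k : ℕ, e / (4 * A) ≤ sSup ((fun g => (-(E' (G k))) g) '' Dic) := by
    intro k
    set ψ : X →L[ℝ] ℝ := -(E' (G k)) with hψdef
    set S : ℝ := sSup ((fun g => ψ g) '' Dic) with hSdef
    have hbAS : BddAbove ((fun g => ψ g) '' Dic) := by
      refine ⟨M, fun v hv => ?_⟩
      obtain ⟨g, hg, rfl⟩ := hv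
      have h1 := hMabs (G k) (hGDE k) g
      have h2 : ‖g‖ ≤ 1 := hDnorm g hg
      have h3 : |ψ g| ≤ M * ‖g‖ := by
        simp only [hψdef, ContinuousLinearMap.neg_apply, abs_neg]
        exact h1
      have := (abs_le.mp h3).2
      nlinarith
    have hle : ∀ g ∈ Dic, ψ g ≤ S := fun g hg => le_csSup hbAS ⟨g, hg, rfl⟩
    have hψsum : ψ f' = ∑ g ∈ c.support, c g * ψ g := by
      have h1 : f' = ∑ g ∈ c.support, c g • g := by
        rw [← hcsum]; rfl
      rw [h1, map_sum]
      exact Finset.sum_congr rfl fun g _ => by rw [map_smul, smul_eq_mul]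
    have hterm : ∀ g ∈ c.support, c g * ψ g ≤ |c g| * S := by
      intro g hg
      have hgD : g ∈ Dic := hcsupp hg
      rcases le_or_gt 0 (c g) with h | h
      · rw [abs_of_nonneg h]
        exact mul_le_mul_of_nonneg_left (hle g hgD) h
      · rw [abs_of_neg h]
        have hneg : ψ (-g) ≤ S := hle (-g) (hDsymm g hgD)
        rw [map_neg] at hneg
        nlinarith
    have h1 : ψ f' ≤ A * S := by
      rw [hψsum, hAdef, Finset.sum_mul]
      exact Finset.sum_le_sum hterm
    have h2 := hψf' k
    rw [← hψdef] at h2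
    rw [hSdef] at h1 ⊢
    rw [div_le_iff₀ (by positivity : (0:ℝ) < 4 * A)]
    nlinarith
  -- choose θ
  set θ : ℝ := min θ₀ (e / (16 * A)) with hθdef
  have hθpos : 0 < θ := lt_min hθ₀pos (by positivity)
  have hθmem : θ ∈ Set.Ioc (0:ℝ) θ₀ := ⟨hθpos, min_le_left _ _⟩
  have hθsmall : 2 * θ ≤ e / (8 * A) := by
    have h : θ ≤ e / (16 * A) := min_le_right _ _
    have h2 : 2 * (e / (16 * A)) = e / (8 * A) := by
      field_simp
      ring
    linarith
  set c₀ : ℝ := e / (8 * A) with hc₀def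
  have hc₀pos : 0 < c₀ := by positivity
  -- per-step decrease
  have hkey : ∀ m : ℕ, 1 ≤ m → E (G m) ≤ E (G (m-1)) - c₀ * (t m * ξ θ m) := by
    intro m hm
    obtain ⟨hξpos, hξle, hξeq⟩ := hξ θ hθmem m
    rcases eq_or_lt_of_le (ht m).1 with htm | htm
    · rw [← htm]
      simpa using hstep m hm
    · -- t m > 0
      have hρpos : 0 < modS E DE (ξ θ m) := by
        rw [hξeq]; positivity
      have hbAξ : BddAbove (Sset (ξ θ m)) := hbdd_of_pos _ hρpos
      have hsm := hsmooth (ξ θ m) hξpos hbAξ (ξ θ m) hξpos le_rfl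
        (G (m-1)) (hGDE (m-1)) (φ m) (hDnorm (φ m) (hφD m hm))
      have hred : E (G m) ≤ E (G (m-1) + ξ θ m • φ m) := by
        refine (hreduction m hm).trans (csInf_le ?_ ⟨ξ θ m, hξpos.le, rfl⟩)
        refine ⟨B, fun v hv => ?_⟩
        obtain ⟨lam, _, rfl⟩ := hv
        exact hB _
      have hgr := hgreedy m hm
      have hS := hSupD (m-1)
      have h1 : E (G m) ≤ E (G (m-1)) + ξ θ m * E' (G (m-1)) (φ m)
          + 2 * modS E DE (ξ θ m) := hred.trans hsm
      have h2 : E' (G (m-1)) (φ m) = -((-(E' (G (m-1)))) (φ m)) := by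
        simp
      have h3 : t m * (e / (4 * A)) ≤ t m * sSup ((fun g => (-(E' (G (m-1)))) g) '' Dic) :=
        mul_le_mul_of_nonneg_left hS htm.le
      have h4 : (-(E' (G (m-1)))) (φ m) ≥ t m * (e / (4 * A)) := le_trans h3 hgr
      rw [hξeq] at h1
      have h5 : ξ θ m * E' (G (m-1)) (φ m) ≤ - (ξ θ m * (t m * (e / (4 * A)))) := by
        rw [h2]
        have := mul_le_mul_of_nonneg_left h4 hξpos.le
        linarith
      have h6 : 2 * (θ * t m * ξ θ m) ≤ (e / (8*A)) * (t m * ξ θ m) := by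
        have h7 : 0 ≤ t m * ξ θ m := mul_nonneg htm.le hξpos.le
        nlinarith [hθsmall]
      rw [hc₀def]
      have h8 : ξ θ m * (t m * (e / (4 * A))) = (e/(4*A)) * (t m * ξ θ m) := by ring
      have h9 : (e/(8*A)) * (t m * ξ θ m) - (e/(4*A)) * (t m * ξ θ m)
          = -((e/(8*A)) * (t m * ξ θ m)) := by ring
      nlinarith [h1, h5, h6]
  -- telescoping
  have htel : ∀ N : ℕ, E (G N) ≤ E (G 0) - c₀ * ∑ m ∈ Finset.Icc 1 N, t m * ξ θ m := by
    intro N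
    induction N with
    | zero => simp
    | succ n ih =>
      have hk := hkey (n+1) (Nat.le_add_left 1 n)
      simp only [Nat.add_sub_cancel] at hk
      rw [Finset.sum_Icc_succ_top (Nat.le_add_left 1 n)]
      have hdist : c₀ * (∑ m ∈ Finset.Icc 1 n, t m * ξ θ m + t (n+1) * ξ θ (n+1))
          = c₀ * ∑ m ∈ Finset.Icc 1 n, t m * ξ θ m + c₀ * (t (n+1) * ξ θ (n+1)) := by ring
      rw [hdist]
      linarith
  -- contradiction with divergence
  have hdivθ := hdiv θ hθmem
  obtain ⟨N, hN⟩ := (Filter.tendsto_atTop.mp hdivθ ((E (G 0) - B) / c₀ + 1)).exists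
  have h1 := htel N
  have h2 := hB (G N)
  have h3 : (E (G 0) - B) / c₀ + 1 ≤ ∑ m ∈ Finset.Icc 1 N, t m * ξ θ m := hN
  have h4 : E (G 0) - B ≤ c₀ * ((E (G 0) - B) / c₀) := by
    rw [mul_div_cancel₀ _ hc₀pos.ne']
  nlinarith [mul_le_mul_of_nonneg_left h3 hc₀pos.le]
end
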